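/- Let * be a star operation on an integral domain R with quotient field K. Define A^{~*} = { x ∈ K : xJ ⊆ A for some nonzero finitely generated ideal J ⊆ R with J^* = R }. Then ~* is a stable star operation of finite character on R, i.e., (A ∩ B)^{~*} = A^{~*} ∩ B^{~*} for all nonzero fractional ideals A, B, and ~* equals its associated finite-character operation. -/

import Mathlib

open FractionalIdeal

noncomputable section

variable (R : Type*) [CommRing R] [IsDomain R]

/-- A star operation on an integral domain `R`. -/
structure StarOperation where
  toFun : FractionalIdeal (nonZeroDivisors R) (FractionRing R) →
    FractionalIdeal (nonZeroDivisors R) (FractionRing R)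
  star_principal : ∀ x : FractionRing R, x ≠ 0 →
    toFun (spanSingleton (nonZeroDivisors R) x) = spanSingleton (nonZeroDivisors R) x
  star_smul : ∀ (x : FractionRing R) (A : FractionalIdeal (nonZeroDivisors R) (FractionRing R)),
    x ≠ 0 → A ≠ 0 →
    toFun (spanSingleton (nonZeroDivisors R) x * A) = spanSingleton (nonZeroDivisors R) x * toFun A
  le_star : ∀ A : FractionalIdeal (nonZeroDivisors R) (FractionRing R), A ≠ 0 → A ≤ toFun A
  star_mono : ∀ A B : FractionalIdeal (nonZeroDivisors R) (FractionRing R),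
    A ≠ 0 → A ≤ B → toFun A ≤ toFun B
  star_idem : ∀ A : FractionalIdeal (nonZeroDivisors R) (FractionRing R),
    A ≠ 0 → toFun (toFun A) = toFun A

/-- The set `A^{~*} = {x ∈ K | xJ ⊆ A for some nonzero f.g. ideal J ⊆ R with J^* = R}`. -/
def tildeSet (s : StarOperation R)
    (A : FractionalIdeal (nonZeroDivisors R) (FractionRing R)) : Set (FractionRing R) :=
  {x | ∃ J : Ideal R, J ≠ ⊥ ∧ J.FG ∧
    s.toFun (J : FractionalIdeal (nonZeroDivisors R) (FractionRing R)) = 1 ∧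
    ∀ j ∈ J, x * algebraMap R (FractionRing R) j ∈ (A : Set (FractionRing R))}

namespace TildeAux

theorem top_ne_bot : (⊤ : Ideal R) ≠ ⊥ := by
  intro h
  have h1 : (1 : R) ∈ (⊥ : Ideal R) := h ▸ Submodule.mem_top
  simp only [Ideal.mem_bot] at h1
  exact one_ne_zero h1

theorem star_one (s : StarOperation R) : s.toFun 1 = 1 := by
  rw [← spanSingleton_one (S := nonZeroDivisors R)]
  exact s.star_principal 1 one_ne_zero

theorem exists_mem_ne_zero
    {A : FractionalIdeal (nonZeroDivisors R) (FractionRing R)} (hA : A ≠ 0) :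
    ∃ a ∈ A, a ≠ 0 := by
  have h : (A : Submodule R (FractionRing R)) ≠ ⊥ := by
    rwa [Ne, coeToSubmodule_eq_bot]
  obtain ⟨a, ha, ha0⟩ := (Submodule.ne_bot_iff _).mp h
  exact ⟨a, mem_coe.mp ha, ha0⟩

theorem fi_mul_ne_zero
    {A B : FractionalIdeal (nonZeroDivisors R) (FractionRing R)} (hA : A ≠ 0) (hB : B ≠ 0) :
    A * B ≠ 0 := by
  obtain ⟨a, ha, ha0⟩ := exists_mem_ne_zero R hA
  obtain ⟨b, hb, hb0⟩ := exists_mem_ne_zero R hB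
  intro h
  have hab : a * b ∈ A * B := mul_mem_mul ha hb
  rw [h] at hab
  exact mul_ne_zero ha0 hb0 (by simpa using hab)

theorem star_mul_le (s : StarOperation R)
    {A B : FractionalIdeal (nonZeroDivisors R) (FractionRing R)} (hA : A ≠ 0) :
    s.toFun A * B ≤ s.toFun (A * B) := by
  rw [mul_le]
  intro i hi j hj
  rcases eq_or_ne j 0 with rfl | hj0
  · rw [mul_zero]; exact zero_mem _
  · have hsj : spanSingleton (nonZeroDivisors R) j ≠ 0 := by
      rwa [Ne, spanSingleton_eq_zero_iff]
    have h1 : spanSingleton (nonZeroDivisors R) j * A ≠ 0 := fi_mul_ne_zero R hsj hA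
    have h2 : spanSingleton (nonZeroDivisors R) j * A ≤ A * B := by
      rw [mul_le]
      intro u hu a ha
      obtain ⟨r, rfl⟩ := (mem_spanSingleton _).mp hu
      have hab : a * j ∈ A * B := mul_mem_mul ha hj
      have h' : r • j * a = r • (a * j) := by rw [smul_mul_assoc, mul_comm]
      rw [h']
      exact Submodule.smul_mem ((A * B : FractionalIdeal (nonZeroDivisors R) (FractionRing R)) :
        Submodule R (FractionRing R)) r hab
    have hmono := s.star_mono _ _ h1 h2
    rw [s.star_smul j A hj0 hA] at hmono
    exact hmono (mem_singleton_mul.mpr ⟨i, hi, mul_comm i j⟩)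

theorem star_coeIdeal_mul (s : StarOperation R) {I J : Ideal R} (hI : I ≠ ⊥) (hJ : J ≠ ⊥)
    (hI1 : s.toFun (I : FractionalIdeal (nonZeroDivisors R) (FractionRing R)) = 1)
    (hJ1 : s.toFun (J : FractionalIdeal (nonZeroDivisors R) (FractionRing R)) = 1) :
    s.toFun ((I * J : Ideal R) : FractionalIdeal (nonZeroDivisors R) (FractionRing R)) = 1 := by
  have hIne : (I : FractionalIdeal (nonZeroDivisors R) (FractionRing R)) ≠ 0 :=
    coeIdeal_ne_zero.mpr hI
  have hJne : (J : FractionalIdeal (nonZeroDivisors R) (FractionRing R)) ≠ 0 :=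
    coeIdeal_ne_zero.mpr hJ
  have hne : (I : FractionalIdeal (nonZeroDivisors R) (FractionRing R)) * J ≠ 0 :=
    fi_mul_ne_zero R hIne hJne
  rw [coeIdeal_mul]
  apply le_antisymm
  · have hle : (I : FractionalIdeal (nonZeroDivisors R) (FractionRing R)) * J ≤ 1 := by
      rw [mul_le]
      intro i hi j hj
      have h := mul_mem_mul (coeIdeal_le_one hi) (coeIdeal_le_one hj)
      rwa [one_mul] at h
    have h := s.star_mono _ _ hne hle
    rwa [star_one R s] at h
  · have key : (J : FractionalIdeal (nonZeroDivisors R) (FractionRing R)) ≤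
        s.toFun ((I : FractionalIdeal (nonZeroDivisors R) (FractionRing R)) * J) := by
      have h := star_mul_le R s (B := (J : FractionalIdeal (nonZeroDivisors R) (FractionRing R)))
        hIne
      rwa [hI1, one_mul] at h
    have h2 := s.star_mono _ _ hJne key
    rw [s.star_idem _ hne, hJ1] at h2
    exact h2

theorem mem_tildeSet_of_mem (s : StarOperation R)
    {A : FractionalIdeal (nonZeroDivisors R) (FractionRing R)} {x : FractionRing R}
    (hx : x ∈ A) : x ∈ tildeSet R s A := by
  refine ⟨⊤, top_ne_bot R, ⟨{1}, by simp⟩, by rw [coeIdeal_top]; exact star_one R s, ?_⟩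
  intro j _
  have h := Submodule.smul_mem (A : Submodule R (FractionRing R)) j (mem_coe.mpr hx)
  rw [SetLike.mem_coe, ← mem_coe]
  rwa [Algebra.smul_def, mul_comm] at h

theorem tildeSet_mono (s : StarOperation R)
    {A B : FractionalIdeal (nonZeroDivisors R) (FractionRing R)} (hAB : A ≤ B) :
    tildeSet R s A ⊆ tildeSet R s B := by
  rintro x ⟨J, hJb, hJfg, hJ1, hJmem⟩
  exact ⟨J, hJb, hJfg, hJ1, fun j hj => hAB (hJmem j hj)⟩

/-- `tildeSet` as a submodule of `K`. -/
def tildeSub (s : StarOperation R)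
    (A : FractionalIdeal (nonZeroDivisors R) (FractionRing R)) :
    Submodule R (FractionRing R) where
  carrier := tildeSet R s A
  zero_mem' := mem_tildeSet_of_mem R s (zero_mem _)
  add_mem' := by
    rintro x y ⟨J1, hJ1b, hJ1fg, hJ11, hJ1m⟩ ⟨J2, hJ2b, hJ2fg, hJ21, hJ2m⟩
    refine ⟨J1 * J2, by simp [Ideal.mul_eq_bot, hJ1b, hJ2b], Submodule.FG.mul hJ1fg hJ2fg,
      star_coeIdeal_mul R s hJ1b hJ2b hJ11 hJ21, ?_⟩
    intro j hj
    have hj1 : j ∈ J1 := Ideal.mul_le_left hj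
    have hj2 : j ∈ J2 := Ideal.mul_le_right hj
    have h := Submodule.add_mem (A : Submodule R (FractionRing R)) (hJ1m j hj1) (hJ2m j hj2)
    rwa [← add_mul] at h
  smul_mem' := by
    rintro r x ⟨J, hJb, hJfg, hJ1, hJm⟩
    refine ⟨J, hJb, hJfg, hJ1, fun j hj => ?_⟩
    have h := Submodule.smul_mem (A : Submodule R (FractionRing R)) r (hJm j hj)
    rwa [← smul_mul_assoc] at h

theorem mem_tildeSub (s : StarOperation R)
    {A : FractionalIdeal (nonZeroDivisors R) (FractionRing R)} {x : FractionRing R} :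
    x ∈ tildeSub R s A ↔ x ∈ tildeSet R s A := Iff.rfl

theorem tildeSub_le_star (s : StarOperation R)
    {A : FractionalIdeal (nonZeroDivisors R) (FractionRing R)} (hA : A ≠ 0) :
    tildeSub R s A ≤ (s.toFun A : Submodule R (FractionRing R)) := by
  rintro x ⟨J, hJb, hJfg, hJ1, hJm⟩
  rcases eq_or_ne x 0 with rfl | hx
  · exact Submodule.zero_mem _
  · have hJne : (J : FractionalIdeal (nonZeroDivisors R) (FractionRing R)) ≠ 0 :=
      coeIdeal_ne_zero.mpr hJb
    have hsx : spanSingleton (nonZeroDivisors R) x ≠ 0 := by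
      rwa [Ne, spanSingleton_eq_zero_iff]
    have h1 : spanSingleton (nonZeroDivisors R) x * J ≤ A := by
      rw [mul_le]
      intro u hu j hj
      obtain ⟨r, rfl⟩ := (mem_spanSingleton _).mp hu
      obtain ⟨j0, hj0, rfl⟩ := (mem_coeIdeal _).mp hj
      have h := Submodule.smul_mem (A : Submodule R (FractionRing R)) r (hJm j0 hj0)
      rwa [← smul_mul_assoc] at h
    have h2 := s.star_mono _ _ (fi_mul_ne_zero R hsx hJne) h1
    rw [s.star_smul x _ hx hJne, hJ1, mul_one] at h2
    exact mem_coe.mpr (h2 ((mem_spanSingleton _).mpr ⟨1, one_smul _ _⟩))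

/-- The tilde operation as a map of fractional ideals. -/
def tildeFun (s : StarOperation R)
    (A : FractionalIdeal (nonZeroDivisors R) (FractionRing R)) :
    FractionalIdeal (nonZeroDivisors R) (FractionRing R) :=
  open scoped Classical in
  if h : A = 0 then 0 else
    ⟨tildeSub R s A, isFractional_of_le (tildeSub_le_star R s h)⟩

theorem mem_tildeFun (s : StarOperation R)
    {A : FractionalIdeal (nonZeroDivisors R) (FractionRing R)} (hA : A ≠ 0)
    {x : FractionRing R} : x ∈ tildeFun R s A ↔ x ∈ tildeSet R s A := by
  rw [show tildeFun R s A = ⟨tildeSub R s A, isFractional_of_le (tildeSub_le_star R s hA)⟩ from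
    dif_neg hA]
  exact Iff.rfl

theorem coe_set_tildeFun (s : StarOperation R)
    {A : FractionalIdeal (nonZeroDivisors R) (FractionRing R)} (hA : A ≠ 0) :
    (tildeFun R s A : Set (FractionRing R)) = tildeSet R s A := by
  ext x
  rw [SetLike.mem_coe]
  exact mem_tildeFun R s hA

theorem le_tildeFun (s : StarOperation R)
    {A : FractionalIdeal (nonZeroDivisors R) (FractionRing R)} (hA : A ≠ 0) :
    A ≤ tildeFun R s A := fun x hx => (mem_tildeFun R s hA).mpr (mem_tildeSet_of_mem R s hx)

theorem ne_zero_of_le {A B : FractionalIdeal (nonZeroDivisors R) (FractionRing R)}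
    (hA : A ≠ 0) (hAB : A ≤ B) : B ≠ 0 := by
  intro h
  exact hA (le_antisymm (h ▸ hAB) (zero_le A))

theorem tildeFun_mono (s : StarOperation R)
    {A B : FractionalIdeal (nonZeroDivisors R) (FractionRing R)} (hA : A ≠ 0) (hAB : A ≤ B) :
    tildeFun R s A ≤ tildeFun R s B := by
  intro x hx
  exact (mem_tildeFun R s (ne_zero_of_le R hA hAB)).mpr
    (tildeSet_mono R s hAB ((mem_tildeFun R s hA).mp hx))

theorem tildeFun_ne_zero (s : StarOperation R)
    {A : FractionalIdeal (nonZeroDivisors R) (FractionRing R)} (hA : A ≠ 0) :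
    tildeFun R s A ≠ 0 := ne_zero_of_le R hA (le_tildeFun R s hA)


theorem mem_inf_fi {A B : FractionalIdeal (nonZeroDivisors R) (FractionRing R)}
    {x : FractionRing R} : x ∈ A ⊓ B ↔ x ∈ A ∧ x ∈ B := by
  rw [← mem_coe, coe_inf, Submodule.mem_inf, mem_coe, mem_coe]

theorem tildeFun_spanSingleton (s : StarOperation R) {x : FractionRing R} (hx : x ≠ 0) :
    tildeFun R s (spanSingleton (nonZeroDivisors R) x) = spanSingleton (nonZeroDivisors R) x := by
  have hs : spanSingleton (nonZeroDivisors R) x ≠ 0 := by rwa [Ne, spanSingleton_eq_zero_iff]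
  refine le_antisymm ?_ (le_tildeFun R s hs)
  intro y hy
  have h := tildeSub_le_star R s hs
    (show y ∈ tildeSub R s (spanSingleton (nonZeroDivisors R) x) from (mem_tildeFun R s hs).mp hy)
  rw [s.star_principal x hx] at h
  exact mem_coe.mp h

theorem tildeFun_smul (s : StarOperation R) {x : FractionRing R}
    {A : FractionalIdeal (nonZeroDivisors R) (FractionRing R)} (hx : x ≠ 0) (hA : A ≠ 0) :
    tildeFun R s (spanSingleton (nonZeroDivisors R) x * A)
      = spanSingleton (nonZeroDivisors R) x * tildeFun R s A := by
  have hsx : spanSingleton (nonZeroDivisors R) x ≠ 0 := by rwa [Ne, spanSingleton_eq_zero_iff]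
  have hxA : spanSingleton (nonZeroDivisors R) x * A ≠ 0 := fi_mul_ne_zero R hsx hA
  apply coeToSubmodule_injective
  apply Submodule.ext
  intro y
  rw [mem_coe, mem_coe, mem_tildeFun R s hxA, mem_singleton_mul]
  constructor
  · rintro ⟨J, hJb, hJfg, hJ1, hJm⟩
    refine ⟨x⁻¹ * y, (mem_tildeFun R s hA).mpr ⟨J, hJb, hJfg, hJ1, ?_⟩, ?_⟩
    · intro j hj
      obtain ⟨a, haA, hya⟩ := mem_singleton_mul.mp (SetLike.mem_coe.mp (hJm j hj))
      have he : x⁻¹ * y * algebraMap R (FractionRing R) j = a := by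
        rw [mul_assoc, hya, ← mul_assoc, inv_mul_cancel₀ hx, one_mul]
      rw [SetLike.mem_coe, he]
      exact haA
    · rw [← mul_assoc, mul_inv_cancel₀ hx, one_mul]
  · rintro ⟨z, hz, rfl⟩
    obtain ⟨J, hJb, hJfg, hJ1, hJm⟩ := (mem_tildeFun R s hA).mp hz
    refine ⟨J, hJb, hJfg, hJ1, fun j hj => ?_⟩
    rw [SetLike.mem_coe, mul_assoc, mem_singleton_mul]
    exact ⟨z * algebraMap R (FractionRing R) j, SetLike.mem_coe.mp (hJm j hj), rfl⟩

theorem key_induction (s : StarOperation R)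
    (A : FractionalIdeal (nonZeroDivisors R) (FractionRing R)) (x : FractionRing R)
    (t : Finset R) :
    (∀ j ∈ Ideal.span (t : Set R), x * algebraMap R (FractionRing R) j ∈ tildeSet R s A) →
    ∃ P : Ideal R, P ≠ ⊥ ∧ P.FG ∧
      s.toFun (P : FractionalIdeal (nonZeroDivisors R) (FractionRing R)) = 1 ∧
      ∀ j ∈ Ideal.span (t : Set R), ∀ p ∈ P,
        x * algebraMap R (FractionRing R) (j * p) ∈ (A : Set (FractionRing R)) := by
  classical
  induction t using Finset.induction_on with
  | empty =>
    intro _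
    refine ⟨⊤, top_ne_bot R, ⟨{1}, by simp⟩, by rw [coeIdeal_top]; exact star_one R s, ?_⟩
    intro j hj p _
    rw [Finset.coe_empty, Ideal.span_empty, Ideal.mem_bot] at hj
    subst hj
    rw [zero_mul, _root_.map_zero, mul_zero]
    exact SetLike.mem_coe.mpr (zero_mem (A : FractionalIdeal (nonZeroDivisors R) (FractionRing R)))
  | @insert a t hat ih =>
    intro h
    obtain ⟨P, hPb, hPfg, hP1, hP⟩ := ih (fun j hj => h j (Ideal.span_mono
      (by rw [Finset.coe_insert]; exact Set.subset_insert a _) hj))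
    have haI : a ∈ Ideal.span ((insert a t : Finset R) : Set R) :=
      Ideal.subset_span (by rw [Finset.coe_insert]; exact Set.mem_insert a _)
    obtain ⟨Ja, hJab, hJafg, hJa1, hJa⟩ := h a haI
    refine ⟨Ja * P, by simp [Ideal.mul_eq_bot, hJab, hPb], Submodule.FG.mul hJafg hPfg,
      star_coeIdeal_mul R s hJab hPb hJa1 hP1, ?_⟩
    intro j hj p hp
    rw [Finset.coe_insert, Ideal.mem_span_insert] at hj
    obtain ⟨r, z, hz, rfl⟩ := hj
    have hpa : p ∈ Ja := Ideal.mul_le_left hp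
    have hpP : p ∈ P := Ideal.mul_le_right hp
    have h1 := hJa p hpa
    have h2 := hP z hz p hpP
    have key : x * algebraMap R (FractionRing R) ((r * a + z) * p)
        = r • (x * algebraMap R (FractionRing R) a * algebraMap R (FractionRing R) p)
          + x * algebraMap R (FractionRing R) (z * p) := by
      simp only [_root_.map_add, _root_.map_mul, Algebra.smul_def]
      ring
    rw [key]
    exact SetLike.mem_coe.mpr (Submodule.add_mem (A : Submodule R (FractionRing R))
      (Submodule.smul_mem (A : Submodule R (FractionRing R)) r
        (mem_coe.mpr (SetLike.mem_coe.mp h1)))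
      (mem_coe.mpr (SetLike.mem_coe.mp h2)))

theorem tildeFun_idem (s : StarOperation R)
    {A : FractionalIdeal (nonZeroDivisors R) (FractionRing R)} (hA : A ≠ 0) :
    tildeFun R s (tildeFun R s A) = tildeFun R s A := by
  have hT : tildeFun R s A ≠ 0 := tildeFun_ne_zero R s hA
  refine le_antisymm ?_ (le_tildeFun R s hT)
  intro y hy
  obtain ⟨J, hJb, hJfg, hJ1, hJm⟩ := (mem_tildeFun R s hT).mp hy
  obtain ⟨t, ht⟩ := hJfg
  have hmem : ∀ j ∈ Ideal.span (t : Set R),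
      y * algebraMap R (FractionRing R) j ∈ tildeSet R s A := by
    intro j hj
    have hmem' := hJm j (by rw [← ht]; exact hj)
    rw [coe_set_tildeFun R s hA] at hmem'
    exact hmem'
  obtain ⟨P, hPb, hPfg, hP1, hP⟩ := key_induction R s A y t hmem
  rw [ht] at hP
  refine (mem_tildeFun R s hA).mpr ⟨J * P, by simp [Ideal.mul_eq_bot, hJb, hPb],
    Submodule.FG.mul ⟨t, ht⟩ hPfg,
    star_coeIdeal_mul R s hJb hPb hJ1 hP1, ?_⟩
  intro w hw
  refine Submodule.mul_induction_on hw (fun m hm n hn => ?_) (fun w1 w2 hw1 hw2 => ?_)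
  · exact hP m hm n hn
  · rw [_root_.map_add, mul_add]
    exact SetLike.mem_coe.mpr (Submodule.add_mem (A : Submodule R (FractionRing R))
      (mem_coe.mpr (SetLike.mem_coe.mp hw1)) (mem_coe.mpr (SetLike.mem_coe.mp hw2)))

theorem inf_ne_zero {A B : FractionalIdeal (nonZeroDivisors R) (FractionRing R)}
    (hA : A ≠ 0) (hB : B ≠ 0) : A ⊓ B ≠ 0 := by
  have hinj : Function.Injective (algebraMap R (FractionRing R)) :=
    IsFractionRing.injective R (FractionRing R)
  obtain ⟨a, ha, ha0⟩ := exists_mem_ne_zero R hA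
  obtain ⟨b, hb, hb0⟩ := exists_mem_ne_zero R hB
  obtain ⟨dA, hdAS, hintA⟩ := A.isFractional
  obtain ⟨dB, hdBS, hintB⟩ := B.isFractional
  obtain ⟨rA, hrA⟩ := hintA a (mem_coe.mpr ha)
  obtain ⟨rB, hrB⟩ := hintB b (mem_coe.mpr hb)
  have hdA0 : algebraMap R (FractionRing R) dA ≠ 0 :=
    (map_ne_zero_iff _ hinj).mpr (nonZeroDivisors.ne_zero hdAS)
  have hdB0 : algebraMap R (FractionRing R) dB ≠ 0 :=
    (map_ne_zero_iff _ hinj).mpr (nonZeroDivisors.ne_zero hdBS)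
  have hrA0 : rA ≠ 0 := by
    intro h
    rw [h, _root_.map_zero, Algebra.smul_def] at hrA
    exact mul_ne_zero hdA0 ha0 hrA.symm
  have hrB0 : rB ≠ 0 := by
    intro h
    rw [h, _root_.map_zero, Algebra.smul_def] at hrB
    exact mul_ne_zero hdB0 hb0 hrB.symm
  have hmemA : algebraMap R (FractionRing R) (rA * rB) ∈ A := by
    have h := Submodule.smul_mem (A : Submodule R (FractionRing R)) (rB * dA) (mem_coe.mpr ha)
    rw [show (rB * dA) • a = algebraMap R (FractionRing R) rB * (dA • a) by
      rw [Algebra.smul_def, Algebra.smul_def, _root_.map_mul, mul_assoc], ← hrA,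
      ← _root_.map_mul, mul_comm rB rA] at h
    exact mem_coe.mp h
  have hmemB : algebraMap R (FractionRing R) (rA * rB) ∈ B := by
    have h := Submodule.smul_mem (B : Submodule R (FractionRing R)) (rA * dB) (mem_coe.mpr hb)
    rw [show (rA * dB) • b = algebraMap R (FractionRing R) rA * (dB • b) by
      rw [Algebra.smul_def, Algebra.smul_def, _root_.map_mul, mul_assoc], ← hrB,
      ← _root_.map_mul] at h
    exact mem_coe.mp h
  intro h
  have hm : algebraMap R (FractionRing R) (rA * rB) ∈ A ⊓ B :=
    (mem_inf_fi R).mpr ⟨hmemA, hmemB⟩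
  rw [h, mem_zero_iff] at hm
  exact (map_ne_zero_iff _ hinj).mpr (mul_ne_zero hrA0 hrB0) hm

theorem tildeFun_inf (s : StarOperation R)
    {A B : FractionalIdeal (nonZeroDivisors R) (FractionRing R)} (hA : A ≠ 0) (hB : B ≠ 0) :
    tildeFun R s (A ⊓ B) = tildeFun R s A ⊓ tildeFun R s B := by
  have hin : A ⊓ B ≠ 0 := inf_ne_zero R hA hB
  refine le_antisymm (le_inf (tildeFun_mono R s hin inf_le_left)
    (tildeFun_mono R s hin inf_le_right)) ?_
  intro x hx
  obtain ⟨hxA, hxB⟩ := (mem_inf_fi R).mp hx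
  obtain ⟨JA, hJAb, hJAfg, hJA1, hJAm⟩ := (mem_tildeFun R s hA).mp hxA
  obtain ⟨JB, hJBb, hJBfg, hJB1, hJBm⟩ := (mem_tildeFun R s hB).mp hxB
  refine (mem_tildeFun R s hin).mpr ⟨JA * JB, by simp [Ideal.mul_eq_bot, hJAb, hJBb],
    Submodule.FG.mul hJAfg hJBfg, star_coeIdeal_mul R s hJAb hJBb hJA1 hJB1, ?_⟩
  intro j hj
  have hj1 : j ∈ JA := Ideal.mul_le_left hj
  have hj2 : j ∈ JB := Ideal.mul_le_right hj
  exact SetLike.mem_coe.mpr ((mem_inf_fi R).mpr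
    ⟨SetLike.mem_coe.mp (hJAm j hj1), SetLike.mem_coe.mp (hJBm j hj2)⟩)

theorem tildeFun_fc (s : StarOperation R)
    {A : FractionalIdeal (nonZeroDivisors R) (FractionRing R)} (hA : A ≠ 0) :
    (tildeFun R s A : Set (FractionRing R)) =
      ⋃ F ∈ {F : FractionalIdeal (nonZeroDivisors R) (FractionRing R) |
          F ≠ 0 ∧ (F : Submodule R (FractionRing R)).FG ∧ F ≤ A},
        (tildeFun R s F : Set (FractionRing R)) := by
  apply Set.Subset.antisymm
  · intro x hx
    rw [coe_set_tildeFun R s hA] at hx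
    obtain ⟨J, hJb, hJfg, hJ1, hJm⟩ := hx
    rcases eq_or_ne x 0 with rfl | hx0
    · obtain ⟨a, ha, ha0⟩ := exists_mem_ne_zero R hA
      have hsa : spanSingleton (nonZeroDivisors R) a ≠ 0 := by
        rwa [Ne, spanSingleton_eq_zero_iff]
      refine Set.mem_biUnion (show spanSingleton (nonZeroDivisors R) a ∈ _ from
        ⟨hsa, by rw [coe_spanSingleton]; exact Submodule.fg_span_singleton a,
          spanSingleton_le_iff_mem.mpr ha⟩) ?_
      exact SetLike.mem_coe.mpr (zero_mem _)
    · have hsx : spanSingleton (nonZeroDivisors R) x ≠ 0 := by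
        rwa [Ne, spanSingleton_eq_zero_iff]
      have hJne : (J : FractionalIdeal (nonZeroDivisors R) (FractionRing R)) ≠ 0 :=
        coeIdeal_ne_zero.mpr hJb
      have hF0 : spanSingleton (nonZeroDivisors R) x * (J :
          FractionalIdeal (nonZeroDivisors R) (FractionRing R)) ≠ 0 := fi_mul_ne_zero R hsx hJne
      have hFfg : Submodule.FG (coeToSubmodule (spanSingleton (nonZeroDivisors R) x * (J :
          FractionalIdeal (nonZeroDivisors R) (FractionRing R)))) := by
        rw [coe_mul, coe_spanSingleton, coe_coeIdeal]
        exact Submodule.FG.mul (Submodule.fg_span_singleton x)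
          ((IsLocalization.coeSubmodule_fg _ (IsFractionRing.injective R (FractionRing R)) J).mpr
            hJfg)
      have hFle : spanSingleton (nonZeroDivisors R) x * (J :
          FractionalIdeal (nonZeroDivisors R) (FractionRing R)) ≤ A := by
        rw [mul_le]
        intro u hu j hj
        obtain ⟨r, rfl⟩ := (mem_spanSingleton _).mp hu
        obtain ⟨j0, hj0, rfl⟩ := (mem_coeIdeal _).mp hj
        have h := Submodule.smul_mem (A : Submodule R (FractionRing R)) r
          (mem_coe.mpr (SetLike.mem_coe.mp (hJm j0 hj0)))
        rw [← smul_mul_assoc] at h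
        exact mem_coe.mp h
      refine Set.mem_biUnion (show spanSingleton (nonZeroDivisors R) x * (J :
        FractionalIdeal (nonZeroDivisors R) (FractionRing R)) ∈ _ from ⟨hF0, hFfg, hFle⟩) ?_
      rw [coe_set_tildeFun R s hF0]
      refine ⟨J, hJb, hJfg, hJ1, fun j hj => ?_⟩
      exact SetLike.mem_coe.mpr (mul_mem_mul ((mem_spanSingleton _).mpr ⟨1, one_smul _ _⟩)
        ((mem_coeIdeal _).mpr ⟨j, hj, rfl⟩))
  · refine Set.iUnion₂_subset ?_
    rintro F ⟨hF0, _, hFle⟩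
    intro x hx
    exact SetLike.mem_coe.mpr
      (tildeFun_mono R s hF0 hFle (SetLike.mem_coe.mp hx))

end TildeAux

/-- **Statement.** For any star operation `*` on `R`, the operation `~*`,
given by `A^{~*} = {x ∈ K | xJ ⊆ A for some nonzero f.g. ideal J with J^* = R}`,
is a star operation on `R` which is stable (`(A ∩ B)^{~*} = A^{~*} ∩ B^{~*}`) and
of finite character (`A^{~*} = ⋃ {F^{~*} : F nonzero f.g. fractional ideal, F ⊆ A}`). -/
theorem tilde_star_is_stable_finite_character (s : StarOperation R) :
    ∃ ts : StarOperation R,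
      (∀ A : FractionalIdeal (nonZeroDivisors R) (FractionRing R), A ≠ 0 →
        (ts.toFun A : Set (FractionRing R)) = tildeSet R s A) ∧
      (∀ A B : FractionalIdeal (nonZeroDivisors R) (FractionRing R), A ≠ 0 → B ≠ 0 →
        ts.toFun (A ⊓ B) = ts.toFun A ⊓ ts.toFun B) ∧
      (∀ A : FractionalIdeal (nonZeroDivisors R) (FractionRing R), A ≠ 0 →
        (ts.toFun A : Set (FractionRing R)) =
          ⋃ F ∈ {F : FractionalIdeal (nonZeroDivisors R) (FractionRing R) |
              F ≠ 0 ∧ (F : Submodule R (FractionRing R)).FG ∧ F ≤ A},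
            (ts.toFun F : Set (FractionRing R))) := by

  refine ⟨{ toFun := TildeAux.tildeFun R s
            star_principal := fun x hx => TildeAux.tildeFun_spanSingleton R s hx
            star_smul := fun x A hx hA => TildeAux.tildeFun_smul R s hx hA
            le_star := fun A hA => TildeAux.le_tildeFun R s hA
            star_mono := fun A B hA hAB => TildeAux.tildeFun_mono R s hA hAB
            star_idem := fun A hA => TildeAux.tildeFun_idem R s hA },
    fun A hA => TildeAux.coe_set_tildeFun R s hA,
    fun A B hA hB => TildeAux.tildeFun_inf R s hA hB,
    fun A hA => TildeAux.tildeFun_fc R s hA⟩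

end
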